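/- arXiv:2308.09609 — 2 statements merged into one kernel-verified Lean document; each statement's English description precedes it below -/
import Mathlib

section
/- If f ∈ W^{1,∞}(ℝ^d) (i.e., f is bounded and Lipschitz) and λ satisfies 0 < λ ≤ (2‖f‖_{L∞}/‖∇f‖_{L∞}) · exp(-4δ^{-1}‖f‖_{L∞}), then f obeys the modulus of continuity ω_λ(ξ) := ω̄(ξ/λ), i.e., |f(x) - f(y)| ≤ ω_λ(|x-y|) for all x ≠ y. -/
theorem stmt_1 {d : ℕ} (δ μ M K lam : ℝ) (hδ : 0 < δ) (hμ : μ ∈ Set.Ioo (0:ℝ) 1)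
    (hM : 0 < M) (hK : 0 < K)
    (f : EuclideanSpace ℝ (Fin d) → ℝ)
    (hfb : ∀ x, |f x| ≤ M) (hfl : ∀ x y, |f x - f y| ≤ K * ‖x - y‖)
    (hlam : 0 < lam) (hlam2 : lam ≤ 2 * M / K * Real.exp (-(4 * M / δ)))
    (ω : ℝ → ℝ)
    (hω : ∀ ξ, ω ξ = if ξ ≤ 1 then δ * (ξ - ξ ^ (1 + μ) / 4)
                     else 3 * δ / 4 + δ / 2 * Real.log ξ) :
    ∀ x y : EuclideanSpace ℝ (Fin d), x ≠ y → |f x - f y| ≤ ω (‖x - y‖ / lam) := by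
  intro x y hxy
  have hr : 0 < ‖x - y‖ := by
    rw [norm_pos_iff]; exact sub_ne_zero.mpr hxy
  set ξ := ‖x - y‖ / lam with hξdef
  have hξ : 0 < ξ := div_pos hr hlam
  have hlip : |f x - f y| ≤ K * lam * ξ := by
    have h1 := hfl x y
    have : K * lam * ξ = K * ‖x - y‖ := by
      field_simp [hξdef]; rw [hξdef]; field_simp [hlam.ne']
    linarith
  have hbd : |f x - f y| ≤ 2 * M := by
    have h1 := hfb x; have h2 := hfb y
    have h3 : |f x - f y| ≤ |f x| + |f y| := by
      calc |f x - f y| = |f x + -f y| := by ring_nf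
        _ ≤ |f x| + |-f y| := abs_add_le _ _
        _ = |f x| + |f y| := by rw [abs_neg]
    linarith
  have hKl : K * lam ≤ 2 * M * Real.exp (-(4 * M / δ)) := by
    have h := mul_le_mul_of_nonneg_left hlam2 hK.le
    have h2 : K * (2 * M / K * Real.exp (-(4 * M / δ)))
        = 2 * M * Real.exp (-(4 * M / δ)) := by
      field_simp
    linarith [h2 ▸ h]
  rw [hω]
  by_cases hξ1 : ξ ≤ 1
  · rw [if_pos hξ1]
    have hpow : ξ ^ (1 + μ) ≤ ξ := by
      have h := Real.rpow_le_rpow_of_exponent_ge hξ hξ1 (by linarith [hμ.1] : (1:ℝ) ≤ 1 + μ)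
      simpa using h
    have hsmall : K * lam ≤ δ / 2 := by
      -- 2 M exp(-(4M/δ)) = (δ/2) t exp(-t) ≤ δ/2 where t = 4M/δ
      have ht : 0 < 4 * M / δ := by positivity
      have h1 : 4 * M / δ ≤ Real.exp (4 * M / δ) := by
        linarith [Real.add_one_le_exp (4 * M / δ)]
      have h2 : Real.exp (-(4 * M / δ)) * Real.exp (4 * M / δ) = 1 := by
        rw [← Real.exp_add]; simp
      have h3 : 0 < Real.exp (-(4 * M / δ)) := Real.exp_pos _
      have h4 : 2 * M * Real.exp (-(4 * M / δ)) ≤ δ / 2 := by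
        have h5 : 4 * M / δ * Real.exp (-(4 * M / δ)) ≤ 1 := by
          nlinarith
        have h6 : 2 * M = δ / 2 * (4 * M / δ) := by field_simp; ring
        nlinarith
      linarith
    calc |f x - f y| ≤ K * lam * ξ := hlip
      _ ≤ δ / 2 * ξ := by nlinarith
      _ ≤ δ * (ξ - ξ ^ (1 + μ) / 4) := by nlinarith
  · rw [if_neg hξ1]
    push_neg at hξ1
    set s := Real.log ξ with hsdef
    have hs : 0 ≤ s := Real.log_nonneg hξ1.le
    have hξs : ξ = Real.exp s := (Real.exp_log hξ).symm
    by_cases hsc : 4 * M / δ ≤ s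
    · have h1 : 2 * M ≤ δ / 2 * s := by
        rw [div_le_iff₀ hδ] at hsc
        nlinarith
      linarith [hbd]
    · push_neg at hsc
      set u := 4 * M / δ - s with hudef
      have hu : 0 < u := by simp only [hudef]; linarith
      have h2M : 2 * M = δ / 2 * (u + s) := by
        simp only [hudef]; field_simp; ring
      have hueq : -(4 * M / δ) + s = -u := by simp only [hudef]; ring
      have hexpu : Real.exp (-(4 * M / δ)) * Real.exp s = Real.exp (-u) := by
        rw [← Real.exp_add, hueq]
      have hlip2 : |f x - f y| ≤ δ / 2 * (u + s) * Real.exp (-u) := by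
        have h1 : K * lam * ξ ≤ 2 * M * Real.exp (-(4 * M / δ)) * Real.exp s := by
          rw [hξs]
          have := Real.exp_pos s
          nlinarith
        have h2 : 2 * M * Real.exp (-(4 * M / δ)) * Real.exp s
            = δ / 2 * (u + s) * Real.exp (-u) := by
          rw [mul_assoc, hexpu, h2M]
        linarith [hlip, h2 ▸ h1]
      have hue : u ≤ Real.exp u := by linarith [Real.add_one_le_exp u]
      have he1 : Real.exp (-u) * Real.exp u = 1 := by rw [← Real.exp_add]; simp
      have he2 : Real.exp (-u) ≤ 1 := Real.exp_le_one_iff.mpr (by linarith)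
      have he3 : 0 < Real.exp (-u) := Real.exp_pos _
      have key : δ / 2 * (u + s) * Real.exp (-u) ≤ 3 * δ / 4 + δ / 2 * s := by
        have hu1 : u * Real.exp (-u) ≤ 1 := by
          have := mul_le_mul_of_nonneg_right hue he3.le
          calc u * Real.exp (-u) ≤ Real.exp u * Real.exp (-u) := this
            _ = 1 := by rw [← Real.exp_add]; simp
        have hs1 : s * Real.exp (-u) ≤ s := by
          calc s * Real.exp (-u) ≤ s * 1 := mul_le_mul_of_nonneg_left he2 hs
            _ = s := mul_one s
        have hsum : (u + s) * Real.exp (-u) ≤ 1 + s := by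
          calc (u + s) * Real.exp (-u)
              = u * Real.exp (-u) + s * Real.exp (-u) := by ring
            _ ≤ 1 + s := by linarith
        have hmul := mul_le_mul_of_nonneg_left hsum (by positivity : (0:ℝ) ≤ δ / 2)
        calc δ / 2 * (u + s) * Real.exp (-u)
            = δ / 2 * ((u + s) * Real.exp (-u)) := by ring
          _ ≤ δ / 2 * (1 + s) := hmul
          _ ≤ 3 * δ / 4 + δ / 2 * s := by linarith
      linarith
end

section
/- Let ω_λ be as in (def.omg) with δ > 0, λ > 0, μ ∈ (0, min{α,1}), α ∈ (0,2). Then for every ξ > λ, one has ω_λ(2η+ξ) - ω_λ(2η-ξ) ≤ (3/2)ω_λ(ξ) for all η ≥ ξ/2, and consequently D(ξ) ≥ (C₁ 2^{α-1}/α) · ω_λ(ξ) ξ^{-α}, where D(ξ) := C₁ ∫_{ξ/2}^∞ [2ω_λ(ξ) - ω_λ(2η+ξ) + ω_λ(2η-ξ)] η^{-1-α} dη. -/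
open MeasureTheory Real Set

set_option maxHeartbeats 1000000

theorem omega_meas_aux (δ lam μ : ℝ) :
    Measurable (fun x : ℝ => if x ≤ lam then δ * lam⁻¹ * x - δ/4 * lam ^ (-(1+μ)) * x ^ (1+μ)
                     else 3*δ/4 + δ/2 * Real.log (x/lam)) := by
  apply Measurable.ite (measurableSet_le measurable_id measurable_const)
  · exact (measurable_const.mul measurable_id).sub
      (measurable_const.mul (measurable_id.pow_const _))
  · exact measurable_const.add
      (measurable_const.mul (Real.measurable_log.comp (measurable_id.div_const lam)))

theorem f_meas_aux (g : ℝ → ℝ) (hg : Measurable g) (c ξ α : ℝ) :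
    Measurable (fun η : ℝ => (2*c - g (2*η+ξ) + g (2*η-ξ)) / η^(1+α)) := by
  apply Measurable.div
  · exact (measurable_const.sub
      (hg.comp ((measurable_const.mul measurable_id).add_const ξ))).add
      (hg.comp ((measurable_const.mul measurable_id).sub_const ξ))
  · exact measurable_id.pow_const _

theorem stmt_5 (α μ δ lam C₁ : ℝ) (hα : α ∈ Set.Ioo (0:ℝ) 2)
    (hμ : 0 < μ) (hμ' : μ < min α 1) (hδ : 0 < δ) (hlam : 0 < lam) (hC₁ : 0 < C₁)
    (ω : ℝ → ℝ)
    (hω : ∀ ξ, ω ξ = if ξ ≤ lam then δ * lam⁻¹ * ξ - δ/4 * lam ^ (-(1+μ)) * ξ ^ (1+μ)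
                     else 3*δ/4 + δ/2 * Real.log (ξ/lam))
    (ξ : ℝ) (hξ : lam < ξ) :
    (∀ η, ξ/2 ≤ η → ω (2*η+ξ) - ω (2*η-ξ) ≤ 3/2 * ω ξ) ∧
    C₁ * (∫ η in Set.Ioi (ξ/2), (2*ω ξ - ω (2*η+ξ) + ω (2*η-ξ)) / η^(1+α))
      ≥ C₁ * 2^(α-1) / α * ω ξ * ξ^(-α) := by
  obtain ⟨hα0, hα2⟩ := hα
  have hξ0 : 0 < ξ := hlam.trans hξ
  have hωξ : ω ξ = 3*δ/4 + δ/2 * Real.log (ξ/lam) := by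
    rw [hω, if_neg (not_le.2 hξ)]
  have hL1 : 0 ≤ Real.log (ξ/lam) :=
    Real.log_nonneg (by rw [le_div_iff₀ hlam]; linarith)
  have hωξpos : 0 < ω ξ := by rw [hωξ]; linarith [mul_nonneg hδ.le hL1]
  have hlog2u : Real.log 2 ≤ 3/4 := by
    linarith [Real.log_two_lt_d9]
  have hlog2l : (1:ℝ)/2 ≤ Real.log 2 := by
    linarith [Real.log_two_gt_d9]
  have hlog3 : Real.log 3 ≤ 2 := by
    linarith [Real.log_le_sub_one_of_pos (show (0:ℝ) < 3 by norm_num)]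
  -- small-argument bounds
  have hsmall : ∀ x, 0 ≤ x → x ≤ lam →
      3*δ/4*(x/lam) ≤ ω x ∧ ω x ≤ δ*(x/lam) := by
    intro x hx hxl
    rw [hω x, if_pos hxl]
    have h1 : x ^ (1+μ) = x * x ^ μ := by
      rw [Real.rpow_add' hx (by positivity), Real.rpow_one]
    have h2 : lam ^ (-(1+μ)) = (lam * lam ^ μ)⁻¹ := by
      rw [Real.rpow_neg hlam.le, Real.rpow_add hlam, Real.rpow_one]
    have hxm : x ^ μ ≤ lam ^ μ := Real.rpow_le_rpow hx hxl hμ.le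
    have hxm0 : 0 ≤ x ^ μ := Real.rpow_nonneg hx μ
    have hlm : (0:ℝ) < lam ^ μ := Real.rpow_pos_of_pos hlam μ
    have key : lam ^ (-(1+μ)) * x ^ (1+μ) ≤ lam⁻¹ * x := by
      rw [h1, h2]
      calc (lam * lam ^ μ)⁻¹ * (x * x ^ μ) ≤ (lam * lam ^ μ)⁻¹ * (x * lam ^ μ) := by
            gcongr
        _ = lam⁻¹ * x := by field_simp
    have key0 : 0 ≤ lam ^ (-(1+μ)) * x ^ (1+μ) := by positivity
    have hxd : δ * lam⁻¹ * x = δ * (x/lam) := by rw [div_eq_mul_inv]; ring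
    constructor
    · have h4 : δ/4 * (lam ^ (-(1+μ)) * x ^ (1+μ)) ≤ δ/4 * (lam⁻¹ * x) := by
        gcongr
      have h5 : δ/4 * (lam⁻¹ * x) = δ/4 * (x/lam) := by rw [div_eq_mul_inv]; ring
      linarith
    · have h3 : 0 ≤ δ/4 * (lam ^ (-(1+μ)) * x ^ (1+μ)) := by positivity
      linarith
  -- formula for large arguments
  have hbig : ∀ x, lam < x → ω x = 3*δ/4 + δ/2 * Real.log (x/lam) := fun x hx => by
    rw [hω x, if_neg (not_le.2 hx)]
  -- main pointwise estimate
  have key : ∀ η, ξ/2 ≤ η → ω (2*η+ξ) - ω (2*η-ξ) ≤ 3/2 * ω ξ := by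
    intro η hη
    set a := 2*η+ξ with ha_def
    set b := 2*η-ξ with hb_def
    have hb0 : 0 ≤ b := by simp only [hb_def]; linarith
    have haξ : 2*ξ ≤ a := by simp only [ha_def]; linarith
    have hala : lam < a := by linarith
    have hωa : ω a = 3*δ/4 + δ/2 * Real.log (a/lam) := hbig a hala
    have hab : a = b + 2*ξ := by simp only [ha_def, hb_def]; ring
    by_cases hbl : b ≤ lam
    · obtain ⟨hlow, _⟩ := hsmall b hb0 hbl
      set s := b/lam with hs_def
      have hs0 : 0 ≤ s := by positivity
      -- log (a/lam) ≤ log 2 + log (ξ/lam) + b/(2*ξ)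
      have hsplit : a/lam = (2*ξ/lam) * ((2*ξ+b)/(2*ξ)) := by
        rw [hab]; field_simp; ring
      have hlogsplit : Real.log (a/lam) =
          Real.log 2 + Real.log (ξ/lam) + Real.log ((2*ξ+b)/(2*ξ)) := by
        rw [hsplit, Real.log_mul (by positivity) (by positivity)]
        rw [show 2*ξ/lam = 2 * (ξ/lam) by ring, Real.log_mul (by norm_num) (by positivity)]
      have hlog1p : Real.log ((2*ξ+b)/(2*ξ)) ≤ b/(2*ξ) := by
        have := Real.log_le_sub_one_of_pos (show (0:ℝ) < (2*ξ+b)/(2*ξ) by positivity)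
        have heq : (2*ξ+b)/(2*ξ) - 1 = b/(2*ξ) := by field_simp; ring
        linarith
      have hb2ξ : b/(2*ξ) ≤ s := by
        rw [hs_def]
        gcongr
        linarith
      have hloga : Real.log (a/lam) ≤ Real.log 2 + Real.log (ξ/lam) + s := by
        linarith
      rw [hωa, hωξ]
      have hmul : δ/2 * Real.log (a/lam) ≤ δ/2 * (Real.log 2 + Real.log (ξ/lam) + s) :=
        mul_le_mul_of_nonneg_left hloga (by linarith)
      linarith [hmul, hlow, mul_nonneg hδ.le hs0, mul_nonneg hδ.le hL1,
        mul_le_mul_of_nonneg_left hlog2u hδ.le]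
    · push_neg at hbl
      have hωb : ω b = 3*δ/4 + δ/2 * Real.log (b/lam) := hbig b hbl
      have hrat : a/b ≤ 3*ξ/lam := by
        rw [div_le_div_iff₀ (by linarith) hlam, hab]
        have m1 : b*lam ≤ b*ξ := mul_le_mul_of_nonneg_left hξ.le hb0
        have m2 : ξ*lam ≤ ξ*b := mul_le_mul_of_nonneg_left hbl.le hξ0.le
        nlinarith [m1, m2]
      have hrat0 : (0:ℝ) < a/b := by
        apply div_pos <;> linarith
      have hlograt : Real.log (a/b) ≤ Real.log 3 + Real.log (ξ/lam) := by
        calc Real.log (a/b) ≤ Real.log (3*ξ/lam) := Real.log_le_log hrat0 hrat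
          _ = Real.log 3 + Real.log (ξ/lam) := by
              rw [show 3*ξ/lam = 3 * (ξ/lam) by ring,
                Real.log_mul (by norm_num) (by positivity)]
      have hdiff : Real.log (a/lam) - Real.log (b/lam) = Real.log (a/b) := by
        rw [Real.log_div (by linarith) hlam.ne', Real.log_div (by linarith) hlam.ne',
          Real.log_div (by linarith) (by linarith)]
        ring
      rw [hωa, hωb, hωξ]
      have hm2 : δ/2 * Real.log (a/b) ≤ δ/2 * (Real.log 3 + Real.log (ξ/lam)) :=
        mul_le_mul_of_nonneg_left hlograt (by linarith)
      have hm1 : δ/2 * Real.log (a/lam) - δ/2 * Real.log (b/lam) = δ/2 * Real.log (a/b) := by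
        rw [← hdiff]; ring
      have hm3 : δ * Real.log 3 ≤ δ * 2 := mul_le_mul_of_nonneg_left hlog3 hδ.le
      linarith [hm1, hm2, hm3, mul_nonneg hδ.le hL1]
  refine ⟨key, ?_⟩
  -- monotonicity
  have mono : ∀ η, ξ/2 ≤ η → ω (2*η-ξ) ≤ ω (2*η+ξ) := by
    intro η hη
    set a := 2*η+ξ with ha_def
    set b := 2*η-ξ with hb_def
    have hb0 : 0 ≤ b := by simp only [hb_def]; linarith
    have haξ : 2*ξ ≤ a := by simp only [ha_def]; linarith
    have hala : lam < a := by linarith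
    have hωa : ω a = 3*δ/4 + δ/2 * Real.log (a/lam) := hbig a hala
    have hloga : Real.log 2 ≤ Real.log (a/lam) := by
      apply Real.log_le_log (by norm_num)
      rw [le_div_iff₀ hlam]; linarith
    by_cases hbl : b ≤ lam
    · obtain ⟨_, hup⟩ := hsmall b hb0 hbl
      have hs1 : b/lam ≤ 1 := by rw [div_le_one hlam]; exact hbl
      have hδb : ω b ≤ δ := by
        have := mul_le_mul_of_nonneg_left hs1 hδ.le
        linarith
      rw [hωa]
      have e1 : δ/2 * Real.log 2 ≤ δ/2 * Real.log (a/lam) :=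
        mul_le_mul_of_nonneg_left hloga (by linarith)
      have e2 : δ * (1/2) ≤ δ * Real.log 2 := mul_le_mul_of_nonneg_left hlog2l hδ.le
      linarith
    · push_neg at hbl
      rw [hωa, hbig b hbl]
      have : Real.log (b/lam) ≤ Real.log (a/lam) := by
        apply Real.log_le_log (div_pos (by linarith) hlam)
        gcongr
        linarith
      linarith [mul_le_mul_of_nonneg_left this (show (0:ℝ) ≤ δ/2 by linarith)]
  -- the integral estimate
  have hc0 : 0 < ξ/2 := by positivity
  have hp : -(1+α) < -1 := by linarith
  have hint_h : IntegrableOn (fun η : ℝ => η ^ (-(1+α))) (Ioi (ξ/2)) :=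
    integrableOn_Ioi_rpow_of_lt hp hc0
  have hmω : Measurable ω := by
    have hfe : ω = fun x => if x ≤ lam then δ * lam⁻¹ * x - δ/4 * lam ^ (-(1+μ)) * x ^ (1+μ)
                     else 3*δ/4 + δ/2 * Real.log (x/lam) := funext hω
    rw [hfe]
    exact omega_meas_aux δ lam μ
  set f : ℝ → ℝ := fun η => (2*ω ξ - ω (2*η+ξ) + ω (2*η-ξ)) / η^(1+α) with hf_def
  clear_value f
  have hfm : Measurable f := by rw [hf_def]; exact f_meas_aux ω hmω (ω ξ) ξ α
  have hbound : ∀ η ∈ Ioi (ξ/2), (ω ξ/2) * η ^ (-(1+α)) ≤ f η ∧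
      f η ≤ (2*ω ξ) * η ^ (-(1+α)) := by
    intro η hη
    have hηc : ξ/2 ≤ η := le_of_lt hη
    have hη0 : 0 < η := lt_trans hc0 hη
    have h1 := key η hηc
    have h2 := mono η hηc
    have hpow : η ^ (-(1+α)) = (η^(1+α))⁻¹ := by
      rw [Real.rpow_neg hη0.le]
    have hfeq : f η = (2*ω ξ - ω (2*η+ξ) + ω (2*η-ξ)) * η ^ (-(1+α)) := by
      simp only [hf_def]
      rw [hpow]; exact div_eq_mul_inv _ _
    have hpnn : 0 ≤ η ^ (-(1+α)) := Real.rpow_nonneg hη0.le _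
    rw [hfeq]
    have hnum1 : ω ξ/2 ≤ 2*ω ξ - ω (2*η+ξ) + ω (2*η-ξ) := by linarith
    have hnum2 : 2*ω ξ - ω (2*η+ξ) + ω (2*η-ξ) ≤ 2*ω ξ := by linarith
    exact ⟨mul_le_mul_of_nonneg_right hnum1 hpnn,
      mul_le_mul_of_nonneg_right hnum2 hpnn⟩
  have hintf : IntegrableOn f (Ioi (ξ/2)) := by
    apply Integrable.mono (hint_h.const_mul (2*ω ξ)) hfm.aestronglyMeasurable
    rw [ae_restrict_iff' measurableSet_Ioi]
    filter_upwards with η hη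
    obtain ⟨hl, hu⟩ := hbound η hη
    have hη0 : 0 < η := lt_trans hc0 hη
    have hpnn : 0 ≤ η ^ (-(1+α)) := Real.rpow_nonneg hη0.le _
    have hf0 : 0 ≤ f η := le_trans (by positivity) hl
    rw [Real.norm_eq_abs, Real.norm_eq_abs, abs_of_nonneg hf0,
      abs_of_nonneg (by positivity)]
    exact hu
  have hmono_int : ∫ η in Ioi (ξ/2), (ω ξ/2) * η ^ (-(1+α)) ≤ ∫ η in Ioi (ξ/2), f η :=
    setIntegral_mono_on (hint_h.const_mul _) hintf measurableSet_Ioi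
      (fun η hη => (hbound η hη).1)
  have hval : ∫ η in Ioi (ξ/2), (ω ξ/2) * η ^ (-(1+α)) = (ω ξ/2) * ((ξ/2) ^ (-α) / α) := by
    rw [MeasureTheory.integral_const_mul, integral_Ioi_rpow_of_lt hp hc0]
    rw [show -(1+α)+1 = -α by ring, neg_div_neg_eq]
  have hceq : ((ξ/2 : ℝ)) ^ (-α) = ξ ^ (-α) * 2 ^ α := by
    rw [Real.div_rpow hξ0.le (by norm_num : (0:ℝ) ≤ 2),
      Real.rpow_neg (by norm_num : (0:ℝ) ≤ 2), div_eq_mul_inv, inv_inv]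
  have hrhs : C₁ * 2^(α-1) / α * ω ξ * ξ^(-α) = C₁ * ((ω ξ/2) * ((ξ/2) ^ (-α) / α)) := by
    rw [hceq, Real.rpow_sub (by norm_num : (0:ℝ) < 2), Real.rpow_one]
    field_simp
  rw [ge_iff_le, hrhs]
  have : (ω ξ/2) * ((ξ/2) ^ (-α) / α) ≤ ∫ η in Ioi (ξ/2), f η := by
    rw [← hval]; exact hmono_int
  exact mul_le_mul_of_nonneg_left this hC₁.le
end
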